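/- Let C be a category, M a class of morphisms, and X₀ → X₁ → X₂ → ⋯ a sequence of morphisms l_n : X_n → X_{n+1}, each of which is left-orthogonal to every morphism of M. If (X, m_n : X_n → X) is a colimit of this sequence, then the morphism m₀ : X₀ → X is left-orthogonal to every morphism of M. -/

import Mathlib

open CategoryTheory

theorem sequential_colimit_of_llp {C : Type u} [Category.{v} C] (M : MorphismProperty C)
    (F : ℕ ⥤ C)
    (hF : ∀ (n : ℕ) {A B : C} (g : A ⟶ B), M g →
      HasLiftingProperty (F.map (homOfLE (Nat.le_succ n))) g)
    (c : Limits.Cocone F) (hc : Limits.IsColimit c)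
    {A B : C} (g : A ⟶ B) (hg : M g) :
    HasLiftingProperty (c.ι.app 0) g := by
  constructor
  intro f v sq
  -- inductively construct lifts t n : F.obj n ⟶ A
  let key : ∀ n : ℕ, {t : F.obj n ⟶ A // t ≫ g = c.ι.app n ≫ v} :=
    fun n => Nat.rec ⟨f, sq.w⟩
      (fun n ih =>
        have : HasLiftingProperty (F.map (homOfLE (Nat.le_succ n))) g := hF n g hg
        have sq' : CommSq ih.1 (F.map (homOfLE (Nat.le_succ n))) g (c.ι.app (n+1) ≫ v) :=
          ⟨by rw [ih.2, ← Category.assoc, c.w]⟩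
        ⟨sq'.lift, sq'.fac_right⟩) n
  have hstep : ∀ n : ℕ, F.map (homOfLE (Nat.le_succ n)) ≫ (key (n+1)).1 = (key n).1 := by
    intro n
    haveI := hF n g hg
    exact CommSq.fac_left _
  have hnat : ∀ (n m : ℕ) (h : n ≤ m), F.map (homOfLE h) ≫ (key m).1 = (key n).1 := by
    intro n m h
    induction m with
    | zero =>
      obtain rfl : n = 0 := Nat.le_zero.mp h
      simp
    | succ m ih =>
      rcases Nat.lt_or_ge n (m+1) with h' | h'
      · have h'' : n ≤ m := Nat.lt_succ_iff.mp h'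
        have : homOfLE h = homOfLE h'' ≫ homOfLE (Nat.le_succ m) := rfl
        rw [this, F.map_comp, Category.assoc, hstep m, ih h'']
      · obtain rfl : n = m+1 := le_antisymm h h'
        simp
  let cone : Limits.Cocone F :=
    { pt := A
      ι := { app := fun n => (key n).1
             naturality := fun n m h => by
               have := hnat n m (leOfHom h)
               simp
               exact this } }
  refine ⟨⟨⟨hc.desc cone, ?_, ?_⟩⟩⟩
  · exact hc.fac cone 0
  · apply hc.hom_ext
    intro n
    rw [← Category.assoc, hc.fac cone n]
    exact (key n).2
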